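/- arXiv:2404.09084 — 2 statements merged into one kernel-verified Lean document; each statement's English description precedes it below -/
import Mathlib

section
/- Let n ≥ 1, let H be a separable Hilbert space, and let K = (K₁,…,Kₙ) be an n-tuple of compact operators on H with r(K) = 0. Then the n-tuple (K₁⊗I,…,Kₙ⊗I) of operators on ℓ²(𝔽ₙ⁺; H), where K_i⊗I acts componentwise by (K_i⊗I)( (h_α)_{α} ) = (K_i h_α)_{α}, is jointly quasi-similar to an n-tuple (L₁,…,Lₙ) of compact operators on ℓ²(𝔽ₙ⁺; H): there exist quasi-affinities X and Y on ℓ²(𝔽ₙ⁺; H) — bounded, injective operators with dense range — such that (K_i^*⊗I)X = X L_i^* and Y(K_i^*⊗I) = L_i^* Y for every i ∈ {1,…,n}. -/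
open Filter ContinuousLinearMap
open scoped ComplexConjugate

noncomputable section

attribute [local instance] Classical.decEq

abbrev Word (n : ℕ) := FreeMonoid (Fin n)

abbrev Fock (n : ℕ) := lp (fun _ : Word n => ℂ) 2

def fockE {n : ℕ} (α : Word n) : Fock n := lp.single 2 α 1

def wordOp {n : ℕ} {H : Type*} [NormedAddCommGroup H] [InnerProductSpace ℂ H]
    (T : Fin n → H →L[ℂ] H) (α : Word n) : H →L[ℂ] H :=
  ((FreeMonoid.toList α).map T).prod

def wordOfFn {n k : ℕ} (f : Fin k → Fin n) : Word n := FreeMonoid.ofList (List.ofFn f)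

def rowSum {n : ℕ} {H : Type*} [NormedAddCommGroup H] [InnerProductSpace ℂ H]
    [CompleteSpace H] (T : Fin n → H →L[ℂ] H) (k : ℕ) : H →L[ℂ] H :=
  ∑ f : Fin k → Fin n, wordOp T (wordOfFn f) * adjoint (wordOp T (wordOfFn f))

def jsr {n : ℕ} {H : Type*} [NormedAddCommGroup H] [InnerProductSpace ℂ H]
    [CompleteSpace H] (T : Fin n → H →L[ℂ] H) : ℝ :=
  limUnder atTop fun k : ℕ => ‖rowSum T k‖ ^ ((1 : ℝ) / (2 * k))

def muProd {n : ℕ} (μ : Word n → ℝ) (β α : Word n) : ℝ :=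
  ((List.range (FreeMonoid.length β)).map
    fun j => μ (FreeMonoid.ofList ((FreeMonoid.toList β).drop j) * α)).prod

def IsWeightedShift {n : ℕ} (μ : Word n → ℝ) (W : Fin n → Fock n →L[ℂ] Fock n) : Prop :=
  ∀ (i : Fin n) (α : Word n),
    W i (fockE α) = (μ (FreeMonoid.of i * α) : ℂ) • fockE (FreeMonoid.of i * α)

def BddWeights {n : ℕ} (μ : Word n → ℝ) : Prop :=
  ∀ i : Fin n, BddAbove (Set.range fun α : Word n => μ (FreeMonoid.of i * α))

def IsWeightedShiftTensor {n : ℕ} {H : Type*} [NormedAddCommGroup H] [InnerProductSpace ℂ H]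
    (μ : Word n → ℝ)
    (Wt : Fin n → lp (fun _ : Word n => H) 2 →L[ℂ] lp (fun _ : Word n => H) 2) : Prop :=
  ∀ (i : Fin n) (α : Word n) (h : H),
    Wt i (lp.single 2 α h) = (μ (FreeMonoid.of i * α) : ℂ) • lp.single 2 (FreeMonoid.of i * α) h

def polyOp {n : ℕ} {H : Type*} [NormedAddCommGroup H] [InnerProductSpace ℂ H]
    (T : Fin n → H →L[ℂ] H) (c : Word n →₀ ℂ) : H →L[ℂ] H :=
  c.sum fun α z => z • wordOp T α

namespace Stmt16Aux

open scoped ENNReal NNReal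

local notation "⟪" x ", " y "⟫" => @inner ℂ _ _ x y

variable {n : ℕ} {H : Type*} [NormedAddCommGroup H] [InnerProductSpace ℂ H] [CompleteSpace H]

lemma wordOp_wordOfFn_zero (T : Fin n → H →L[ℂ] H) (f : Fin 0 → Fin n) :
    wordOp T (wordOfFn f) = 1 := by
  simp [wordOp, wordOfFn, List.ofFn_zero]

lemma wordOp_wordOfFn_snoc (T : Fin n → H →L[ℂ] H) {k : ℕ} (f : Fin k → Fin n) (i : Fin n) :
    wordOp T (wordOfFn (Fin.snoc f i)) = wordOp T (wordOfFn f) * T i := by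
  unfold wordOp wordOfFn
  rw [FreeMonoid.toList_ofList, FreeMonoid.toList_ofList, List.ofFn_succ']
  simp [List.concat_eq_append, mul_def]

lemma norm_wordOp_sq_le (K : Fin n → H →L[ℂ] H) {k : ℕ} (f : Fin k → Fin n) :
    ‖wordOp K (wordOfFn f)‖ ^ 2 ≤ ‖rowSum K k‖ := by
  set A := wordOp K (wordOfFn f) with hA
  have key : ∀ x : H, ‖adjoint A x‖ ^ 2 ≤ ‖rowSum K k‖ * ‖x‖ ^ 2 := by
    intro x
    have h1 : ∀ g : Fin k → Fin n,
        RCLike.re ⟪(wordOp K (wordOfFn g) * adjoint (wordOp K (wordOfFn g))) x, x⟫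
          = ‖adjoint (wordOp K (wordOfFn g)) x‖ ^ 2 := by
      intro g
      set B := wordOp K (wordOfFn g) with hB
      have h2 := adjoint_inner_right (adjoint B) x (adjoint B x)
      rw [adjoint_adjoint] at h2
      rw [ContinuousLinearMap.mul_apply, inner_re_symm, h2, inner_self_eq_norm_sq]
    have h3 : RCLike.re ⟪rowSum K k x, x⟫
        = ∑ g : Fin k → Fin n, RCLike.re ⟪(wordOp K (wordOfFn g) * adjoint (wordOp K (wordOfFn g))) x, x⟫ := by
      rw [rowSum, ContinuousLinearMap.sum_apply, sum_inner, map_sum]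
    have h4 : ‖adjoint A x‖ ^ 2 ≤ RCLike.re ⟪rowSum K k x, x⟫ := by
      rw [h3, ← h1 f]
      exact Finset.single_le_sum (f := fun g => RCLike.re ⟪(wordOp K (wordOfFn g) * adjoint (wordOp K (wordOfFn g))) x, x⟫)
        (fun g _ => by rw [h1 g]; positivity) (Finset.mem_univ f)
    refine h4.trans ?_
    calc RCLike.re ⟪rowSum K k x, x⟫ ≤ ‖⟪rowSum K k x, x⟫‖ := RCLike.re_le_norm _
      _ ≤ ‖rowSum K k x‖ * ‖x‖ := norm_inner_le_norm _ _
      _ ≤ (‖rowSum K k‖ * ‖x‖) * ‖x‖ := by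
          gcongr; exact (rowSum K k).le_opNorm x
      _ = ‖rowSum K k‖ * ‖x‖ ^ 2 := by ring
  have hadj : ‖adjoint A‖ ≤ Real.sqrt ‖rowSum K k‖ := by
    refine opNorm_le_bound _ (Real.sqrt_nonneg _) fun x => ?_
    have h5 := key x
    have h6 : (Real.sqrt ‖rowSum K k‖ * ‖x‖) ^ 2 = ‖rowSum K k‖ * ‖x‖ ^ 2 := by
      rw [mul_pow, Real.sq_sqrt (norm_nonneg _)]
    have h7 : ‖adjoint A x‖ ^ 2 ≤ (Real.sqrt ‖rowSum K k‖ * ‖x‖) ^ 2 := by rw [h6]; exact h5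
    have := Real.sqrt_le_sqrt h7
    rwa [Real.sqrt_sq (norm_nonneg _), Real.sqrt_sq (by positivity)] at this
  have hnorm : ‖A‖ = ‖adjoint A‖ := by
    conv_lhs => rw [← adjoint_adjoint A]
    exact (LinearIsometryEquiv.norm_map ContinuousLinearMap.adjoint (adjoint A))
  calc ‖A‖ ^ 2 = ‖adjoint A‖ ^ 2 := by rw [hnorm]
    _ ≤ Real.sqrt ‖rowSum K k‖ ^ 2 := by gcongr <;> first | exact norm_nonneg _ | exact hadj
    _ = ‖rowSum K k‖ := Real.sq_sqrt (norm_nonneg _)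


def Sig (K : Fin n → H →L[ℂ] H) (k : ℕ) : H →L[ℂ] H :=
  ∑ f : Fin k → Fin n, adjoint (wordOp K (wordOfFn f)) * wordOp K (wordOfFn f)

lemma norm_Sig_le (K : Fin n → H →L[ℂ] H) (k : ℕ) :
    ‖Sig K k‖ ≤ (n : ℝ) ^ k * ‖rowSum K k‖ := by
  have h1 : ∀ f : Fin k → Fin n,
      ‖adjoint (wordOp K (wordOfFn f)) * wordOp K (wordOfFn f)‖ ≤ ‖rowSum K k‖ := by
    intro f
    calc ‖adjoint (wordOp K (wordOfFn f)) * wordOp K (wordOfFn f)‖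
        ≤ ‖adjoint (wordOp K (wordOfFn f))‖ * ‖wordOp K (wordOfFn f)‖ := norm_mul_le _ _
      _ = ‖wordOp K (wordOfFn f)‖ ^ 2 := by
          rw [LinearIsometryEquiv.norm_map ContinuousLinearMap.adjoint (wordOp K (wordOfFn f))]
          ring
      _ ≤ ‖rowSum K k‖ := norm_wordOp_sq_le K f
  calc ‖Sig K k‖ ≤ ∑ f : Fin k → Fin n, ‖adjoint (wordOp K (wordOfFn f)) * wordOp K (wordOfFn f)‖ :=
        norm_sum_le _ _
    _ ≤ ∑ _f : Fin k → Fin n, ‖rowSum K k‖ := Finset.sum_le_sum fun f _ => h1 f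
    _ = (n : ℝ) ^ k * ‖rowSum K k‖ := by
        rw [Finset.sum_const, Finset.card_univ, Fintype.card_fun]
        simp [nsmul_eq_mul]

lemma re_inner_Sig (K : Fin n → H →L[ℂ] H) (k : ℕ) (y : H) :
    RCLike.re ⟪y, Sig K k y⟫ = ∑ f : Fin k → Fin n, ‖wordOp K (wordOfFn f) y‖ ^ 2 := by
  rw [Sig, ContinuousLinearMap.sum_apply, inner_sum, map_sum]
  refine Finset.sum_congr rfl fun f _ => ?_
  rw [ContinuousLinearMap.mul_apply, adjoint_inner_right, inner_self_eq_norm_sq]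

lemma eventually_rowSum_le (K : Fin n → H →L[ℂ] H)
    (hq : Tendsto (fun k : ℕ => ‖rowSum K k‖ ^ ((1 : ℝ) / (2 * k))) atTop (nhds 0))
    {θ : ℝ} (h0 : 0 < θ) (h1 : θ ≤ 1) :
    ∀ᶠ k : ℕ in atTop, ‖rowSum K k‖ ≤ θ ^ k := by
  have h2 : ∀ᶠ k : ℕ in atTop, ‖rowSum K k‖ ^ ((1 : ℝ) / (2 * k)) < θ :=
    hq.eventually_lt_const h0
  filter_upwards [h2, eventually_ge_atTop 1] with k hk hk1
  have hr : (0 : ℝ) ≤ ‖rowSum K k‖ := norm_nonneg _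
  have hk0 : ((2 * k : ℕ) : ℝ) ≠ 0 := by
    have : (1 : ℕ) ≤ k := hk1
    positivity
  have key : ‖rowSum K k‖ = (‖rowSum K k‖ ^ ((1 : ℝ) / (2 * k))) ^ (2 * k : ℕ) := by
    rw [← Real.rpow_natCast (‖rowSum K k‖ ^ ((1 : ℝ) / (2 * k))) (2 * k), ← Real.rpow_mul hr]
    rw [show ((1 : ℝ) / (2 * k)) * ((2 * k : ℕ) : ℝ) = 1 by
      push_cast
      field_simp]
    exact (Real.rpow_one _).symm
  calc ‖rowSum K k‖ = (‖rowSum K k‖ ^ ((1 : ℝ) / (2 * k))) ^ (2 * k : ℕ) := key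
    _ ≤ θ ^ (2 * k : ℕ) := by
        apply pow_le_pow_left₀ (Real.rpow_nonneg hr _) hk.le
    _ ≤ θ ^ k := pow_le_pow_of_le_one h0.le h1 (by omega)

lemma summable_of_eventually_norm_le_geometric {A : Type*} [NormedAddCommGroup A]
    [CompleteSpace A] {f : ℕ → A} {r : ℝ} (hr0 : 0 ≤ r) (hr1 : r < 1)
    (h : ∀ᶠ k : ℕ in atTop, ‖f k‖ ≤ r ^ k) : Summable f := by
  obtain ⟨N, hN⟩ := eventually_atTop.1 h
  have hgeo : Summable fun k : ℕ => r ^ (k + N) := by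
    apply (summable_nat_add_iff N).2
    exact summable_geometric_of_lt_one hr0 hr1
  have : Summable fun k : ℕ => f (k + N) :=
    Summable.of_norm_bounded hgeo fun k => hN (k + N) (Nat.le_add_left _ _)
  exact (summable_nat_add_iff N).1 this

set_option maxHeartbeats 2000000 in
set_option synthInstance.maxHeartbeats 400000 in
lemma exists_conj (K : Fin n → H →L[ℂ] H)
    (hq : Tendsto (fun k : ℕ => ‖rowSum K k‖ ^ ((1 : ℝ) / (2 * k))) atTop (nhds 0))
    {δ : ℝ} (hδ0 : 0 < δ) (hδ1 : δ ≤ 1) :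
    ∃ S Sinv : H →L[ℂ] H, Sinv ∘L S = 1 ∧ S ∘L Sinv = 1 ∧ adjoint S = S ∧
      (∀ x, ‖Sinv x‖ ≤ ‖x‖) ∧ (∀ i, ‖S ∘L K i ∘L Sinv‖ ≤ δ) := by
  classical
  set c : ℝ := δ⁻¹ ^ 2 with hc
  have hc0 : 0 < c := by positivity
  have hc1 : 1 ≤ c := by
    rw [hc]
    nlinarith [inv_anti₀ hδ0 hδ1, hδ0, one_le_inv_iff₀.2 ⟨hδ0, hδ1⟩]
  have hδc : δ ^ 2 * c = 1 := by
    rw [hc]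
    field_simp
  -- summability of the series defining P
  set θ : ℝ := (2 * c * (n + 1))⁻¹ with hθ
  have hθ0 : 0 < θ := by positivity
  have hθ1 : θ ≤ 1 := by
    rw [hθ]
    rw [inv_le_one_iff₀]
    right
    nlinarith
  have hev := eventually_rowSum_le K hq hθ0 hθ1
  have hbound : ∀ᶠ k : ℕ in atTop, ‖((c ^ k : ℝ) : ℂ) • Sig K k‖ ≤ (1 / 2 : ℝ) ^ k := by
    filter_upwards [hev] with k hk
    have h1 : ‖((c ^ k : ℝ) : ℂ) • Sig K k‖ = c ^ k * ‖Sig K k‖ := by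
      rw [norm_smul]
      congr 1
      rw [Complex.norm_real, Real.norm_eq_abs]
      exact abs_of_nonneg (by positivity)
    rw [h1]
    calc c ^ k * ‖Sig K k‖ ≤ c ^ k * ((n : ℝ) ^ k * ‖rowSum K k‖) := by
          gcongr
          exact norm_Sig_le K k
      _ ≤ c ^ k * ((n : ℝ) ^ k * θ ^ k) := by
          gcongr
      _ = (c * (n : ℝ) * θ) ^ k := by ring
      _ ≤ (1 / 2 : ℝ) ^ k := by
          apply pow_le_pow_left₀ (by positivity)
          rw [hθ]
          rw [div_eq_mul_inv, one_mul]
          have h2 : c * (n:ℝ) * (2 * c * ((n:ℝ) + 1))⁻¹ = (n:ℝ) / (2 * ((n:ℝ)+1)) := by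
            field_simp
          rw [h2]
          rw [div_le_iff₀ (by positivity)]
          nlinarith [Nat.cast_nonneg (α := ℝ) n]
  have hsum : Summable (fun k : ℕ => ((c ^ k : ℝ) : ℂ) • Sig K k) :=
    summable_of_eventually_norm_le_geometric (by norm_num) (by norm_num) hbound
  set P : H →L[ℂ] H := ∑' k : ℕ, ((c ^ k : ℝ) : ℂ) • Sig K k with hPdef
  have hP : HasSum (fun k : ℕ => ((c ^ k : ℝ) : ℂ) • Sig K k) P := hsum.hasSum
  -- quadratic form of P
  set F : H → ℕ → ℝ := fun y k => c ^ k * ∑ f : Fin k → Fin n, ‖wordOp K (wordOfFn f) y‖ ^ 2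
    with hFdef
  have hFy : ∀ y : H, HasSum (F y) (RCLike.re ⟪y, P y⟫) := by
    intro y
    have h1 := hP.mapL (ContinuousLinearMap.apply ℂ H y)
    have h2 := h1.mapL (innerSL ℂ y)
    have h3 := h2.mapL Complex.reCLM
    convert h3 using 1
    funext k
    simp only [ContinuousLinearMap.apply_apply, innerSL_apply_apply, Complex.reCLM_apply]
    rw [ContinuousLinearMap.smul_apply, inner_smul_right]
    rw [hFdef]
    dsimp only
    rw [Complex.mul_re]
    simp only [Complex.ofReal_re, Complex.ofReal_im, zero_mul, sub_zero]
    congr 1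
    have := re_inner_Sig K k y
    rw [show RCLike.re ⟪y, Sig K k y⟫ = (⟪y, Sig K k y⟫ : ℂ).re from rfl] at this
    exact this.symm
    rfl
  have hFnonneg : ∀ y k, 0 ≤ F y k := by
    intro y k
    rw [hFdef]
    dsimp only
    positivity
  have hlow : ∀ y : H, ‖y‖ ^ 2 ≤ RCLike.re ⟪y, P y⟫ := by
    intro y
    have h0 : F y 0 = ‖y‖ ^ 2 := by
      rw [hFdef]
      dsimp only
      rw [pow_zero, one_mul]
      rw [Fintype.sum_unique (fun f : Fin 0 → Fin n => ‖wordOp K (wordOfFn f) y‖ ^ 2)]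
      rw [wordOp_wordOfFn_zero, ContinuousLinearMap.one_apply]
    calc ‖y‖ ^ 2 = F y 0 := h0.symm
      _ ≤ RCLike.re ⟪y, P y⟫ := le_hasSum (hFy y) 0 fun j _ => hFnonneg y j
  -- the key inequality
  have hkey : ∀ (i : Fin n) (y : H),
      RCLike.re ⟪K i y, P (K i y)⟫ ≤ δ ^ 2 * RCLike.re ⟪y, P y⟫ := by
    intro i y
    have hterm : ∀ k : ℕ, F (K i y) k ≤ δ ^ 2 * F y (k + 1) := by
      intro k
      have hrw : ∀ f : Fin k → Fin n,
          ‖wordOp K (wordOfFn f) (K i y)‖ ^ 2 = ‖wordOp K (wordOfFn (Fin.snoc f i)) y‖ ^ 2 := by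
        intro f
        rw [wordOp_wordOfFn_snoc, ContinuousLinearMap.mul_apply]
      have hinj : Function.Injective (fun f : Fin k → Fin n => (Fin.snoc f i : Fin (k+1) → Fin n)) := by
        intro a b hab
        funext j
        have := congrFun hab (Fin.castSucc j)
        simpa [Fin.snoc_castSucc] using this
      have hsumle : (∑ f : Fin k → Fin n, ‖wordOp K (wordOfFn (Fin.snoc f i)) y‖ ^ 2)
          ≤ ∑ g : Fin (k+1) → Fin n, ‖wordOp K (wordOfFn g) y‖ ^ 2 := by
        calc (∑ f : Fin k → Fin n, ‖wordOp K (wordOfFn (Fin.snoc f i)) y‖ ^ 2)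
            = ∑ g ∈ Finset.univ.image (fun f : Fin k → Fin n => (Fin.snoc f i : Fin (k+1) → Fin n)),
                ‖wordOp K (wordOfFn g) y‖ ^ 2 :=
              (Finset.sum_image (f := fun g : Fin (k+1) → Fin n => ‖wordOp K (wordOfFn g) y‖ ^ 2)
                (g := fun f : Fin k → Fin n => (Fin.snoc f i : Fin (k+1) → Fin n))
                (fun a _ b _ hab => hinj hab)).symm
          _ ≤ ∑ g : Fin (k+1) → Fin n, ‖wordOp K (wordOfFn g) y‖ ^ 2 :=
              Finset.sum_le_sum_of_subset_of_nonneg (Finset.subset_univ _)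
                (fun g _ _ => by positivity)
      rw [hFdef]
      dsimp only
      calc c ^ k * ∑ f : Fin k → Fin n, ‖wordOp K (wordOfFn f) (K i y)‖ ^ 2
          = c ^ k * ∑ f : Fin k → Fin n, ‖wordOp K (wordOfFn (Fin.snoc f i)) y‖ ^ 2 := by
            congr 1
            exact Finset.sum_congr rfl fun f _ => hrw f
        _ ≤ c ^ k * ∑ g : Fin (k+1) → Fin n, ‖wordOp K (wordOfFn g) y‖ ^ 2 := by
            gcongr
        _ = δ ^ 2 * (c ^ (k+1) * ∑ g : Fin (k+1) → Fin n, ‖wordOp K (wordOfFn g) y‖ ^ 2) := by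
            have hc' : δ ^ 2 * c ^ (k+1) = c ^ k := by
              rw [pow_succ]
              calc δ ^ 2 * (c ^ k * c) = (δ ^ 2 * c) * c ^ k := by ring
                _ = c ^ k := by rw [hδc, one_mul]
            rw [← mul_assoc, hc']
    have hsumF : Summable (F y) := (hFy y).summable
    have hsumFs : Summable (fun k => F y (k + 1)) := (summable_nat_add_iff 1).2 hsumF
    have hle1 : RCLike.re ⟪K i y, P (K i y)⟫ ≤ ∑' k : ℕ, δ ^ 2 * F y (k + 1) := by
      rw [← (hFy (K i y)).tsum_eq]
      exact Summable.tsum_le_tsum hterm (hFy (K i y)).summable (hsumFs.mul_left _)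
    have hle2 : (∑' k : ℕ, δ ^ 2 * F y (k + 1)) = δ ^ 2 * ∑' k : ℕ, F y (k + 1) := tsum_mul_left
    have hle3 : (∑' k : ℕ, F y (k + 1)) ≤ RCLike.re ⟪y, P y⟫ := by
      have h4 := Summable.tsum_eq_zero_add hsumF
      rw [← (hFy y).tsum_eq] at *
      have h5 : 0 ≤ F y 0 := hFnonneg y 0
      linarith [h4]
    calc RCLike.re ⟪K i y, P (K i y)⟫ ≤ ∑' k : ℕ, δ ^ 2 * F y (k + 1) := hle1
      _ = δ ^ 2 * ∑' k : ℕ, F y (k + 1) := hle2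
      _ ≤ δ ^ 2 * RCLike.re ⟪y, P y⟫ := by
          apply mul_le_mul_of_nonneg_left hle3 (by positivity)
  -- P is selfadjoint
  have hSigsym : ∀ (k : ℕ) (x z : H), ⟪Sig K k x, z⟫ = ⟪x, Sig K k z⟫ := by
    intro k x z
    rw [Sig, ContinuousLinearMap.sum_apply, ContinuousLinearMap.sum_apply, sum_inner, inner_sum]
    refine Finset.sum_congr rfl fun f _ => ?_
    rw [ContinuousLinearMap.mul_apply, ContinuousLinearMap.mul_apply, adjoint_inner_left, adjoint_inner_right]
  have hsym : ∀ x z : H, ⟪P x, z⟫ = ⟪x, P z⟫ := by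
    intro x z
    have h1 : HasSum (fun k => ⟪z, (((c ^ k : ℝ) : ℂ) • Sig K k) x⟫) ⟪z, P x⟫ :=
      (hP.mapL (ContinuousLinearMap.apply ℂ H x)).mapL (innerSL ℂ z)
    have h2 : HasSum (fun k => ⟪x, (((c ^ k : ℝ) : ℂ) • Sig K k) z⟫) ⟪x, P z⟫ :=
      (hP.mapL (ContinuousLinearMap.apply ℂ H z)).mapL (innerSL ℂ x)
    have h3 : HasSum (fun k => (starRingEnd ℂ) ⟪z, (((c ^ k : ℝ) : ℂ) • Sig K k) x⟫)
        ((starRingEnd ℂ) ⟪z, P x⟫) :=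
      h1.map (starAddEquiv : ℂ ≃+ ℂ).toAddMonoidHom continuous_star
    have h4 : (fun k => (starRingEnd ℂ) ⟪z, (((c ^ k : ℝ) : ℂ) • Sig K k) x⟫)
        = fun k => ⟪x, (((c ^ k : ℝ) : ℂ) • Sig K k) z⟫ := by
      funext k
      rw [inner_conj_symm]
      rw [ContinuousLinearMap.smul_apply, ContinuousLinearMap.smul_apply,
        inner_smul_left, inner_smul_right]
      rw [hSigsym k x z]
      congr 1
      simp [Complex.conj_ofReal]
    rw [h4] at h3
    have h5 := h3.unique h2
    rw [← h5, inner_conj_symm]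
  have hPsa : adjoint P = P := by
    have := (eq_adjoint_iff P P).2 hsym
    exact this.symm
  have hP0 : (0 : H →L[ℂ] H) ≤ P := by
    rw [ContinuousLinearMap.nonneg_iff_isPositive]
    constructor
    · intro x y
      exact hsym x y
    · intro x
      have : ContinuousLinearMap.reApplyInnerSelf P x = RCLike.re ⟪P x, x⟫ := rfl
      rw [this, inner_re_symm]
      exact le_trans (by positivity) (hlow x)
  -- the square root
  set S : H →L[ℂ] H := CFC.sqrt P with hSdef
  have hS0 : (0 : H →L[ℂ] H) ≤ S := CFC.sqrt_nonneg P
  have hSsa' : IsSelfAdjoint S := IsSelfAdjoint.of_nonneg hS0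
  have hSsa : adjoint S = S := by
    rw [← ContinuousLinearMap.star_eq_adjoint]
    exact hSsa'
  have hSS : S * S = P := CFC.sqrt_mul_sqrt_self P hP0
  have hSnormsq : ∀ y : H, ‖S y‖ ^ 2 = RCLike.re ⟪y, P y⟫ := by
    intro y
    have h := adjoint_inner_right S y (S y)
    rw [hSsa] at h
    rw [← hSS, ContinuousLinearMap.mul_apply, h, inner_self_eq_norm_sq]
  have hSlow : ∀ y : H, ‖y‖ ≤ ‖S y‖ := by
    intro y
    have h1 := hlow y
    rw [← hSnormsq y] at h1
    have := Real.sqrt_le_sqrt h1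
    rwa [Real.sqrt_sq (norm_nonneg _), Real.sqrt_sq (norm_nonneg _)] at this
  have hinj : Function.Injective S := by
    intro a b hab
    have h1 := hSlow (a - b)
    rw [map_sub, hab, sub_self, norm_zero] at h1
    have := norm_le_zero_iff.1 h1
    exact sub_eq_zero.1 this
  have hanti : AntilipschitzWith 1 S :=
    ContinuousLinearMap.antilipschitz_of_bound S fun x => by
      simpa using hSlow x
  have hclosed : IsClosed (LinearMap.range (S : H →ₗ[ℂ] H) : Set H) :=
    hanti.isClosed_range S.uniformContinuous
  have hsurjtop : LinearMap.range (S : H →ₗ[ℂ] H) = ⊤ := by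
    have hcs : CompleteSpace (LinearMap.range (S : H →ₗ[ℂ] H)) := hclosed.completeSpace_coe
    rw [← Submodule.orthogonal_eq_bot_iff]
    rw [Submodule.eq_bot_iff]
    intro y hy
    have h0 : S y = 0 := by
      have h2 : ⟪S (S y), y⟫ = 0 :=
        (Submodule.mem_orthogonal _ y).1 hy (S (S y)) (LinearMap.mem_range_self _ _)
      have h3 : ⟪S (S y), y⟫ = ⟪S y, S y⟫ := by
        have h4 := adjoint_inner_left S y (S y)
        rw [hSsa] at h4
        exact h4
      rw [h3] at h2
      exact inner_self_eq_zero.1 h2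
    have h5 := hSlow y
    rw [h0, norm_zero] at h5
    exact norm_le_zero_iff.1 h5
  have hker : LinearMap.ker (S : H →ₗ[ℂ] H) = ⊥ := by
    rw [LinearMap.ker_eq_bot]
    exact hinj
  set e := ContinuousLinearEquiv.ofBijective S hker hsurjtop with hedef
  set Sinv : H →L[ℂ] H := (e.symm : H →L[ℂ] H) with hSinvdef
  have heS : ∀ x, e x = S x := fun x => rfl
  have hSconv : ∀ x, S (Sinv x) = x := by
    intro x
    have : e (e.symm x) = x := e.apply_symm_apply x
    rwa [heS] at this
  have hSconv' : ∀ x, Sinv (S x) = x := by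
    intro x
    have : e.symm (e x) = x := e.symm_apply_apply x
    rwa [heS] at this
  refine ⟨S, Sinv, ?_, ?_, hSsa, ?_, ?_⟩
  · ext x
    simpa using hSconv' x
  · ext x
    simpa using hSconv x
  · intro x
    calc ‖Sinv x‖ ≤ ‖S (Sinv x)‖ := hSlow _
      _ = ‖x‖ := by rw [hSconv]
  · intro i
    refine opNorm_le_bound _ hδ0.le fun x => ?_
    have hx : (S ∘L K i ∘L Sinv) x = S (K i (Sinv x)) := rfl
    rw [hx]
    have h1 : ‖S (K i (Sinv x))‖ ^ 2 = RCLike.re ⟪K i (Sinv x), P (K i (Sinv x))⟫ := hSnormsq _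
    have h2 := hkey i (Sinv x)
    have h3 : RCLike.re ⟪Sinv x, P (Sinv x)⟫ = ‖S (Sinv x)‖ ^ 2 := (hSnormsq _).symm
    rw [hSconv] at h3
    have h4 : ‖S (K i (Sinv x))‖ ^ 2 ≤ (δ * ‖x‖) ^ 2 := by
      rw [h1]
      calc RCLike.re ⟪K i (Sinv x), P (K i (Sinv x))⟫ ≤ δ ^ 2 * RCLike.re ⟪Sinv x, P (Sinv x)⟫ := h2
        _ = δ ^ 2 * ‖x‖ ^ 2 := by rw [h3]
        _ = (δ * ‖x‖) ^ 2 := by ring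
    have := Real.sqrt_le_sqrt h4
    rwa [Real.sqrt_sq (norm_nonneg _), Real.sqrt_sq (by positivity)] at this

section Diag

variable (n) in
abbrev FkH (H : Type*) [NormedAddCommGroup H] [InnerProductSpace ℂ H] :=
  lp (fun _ : Word n => H) 2

lemma two_toReal : ((2 : ℝ≥0∞).toReal) = ((2 : ℕ) : ℝ) := by simp

lemma rpow_two_eq (a : ℝ) : a ^ ((2 : ℝ≥0∞).toReal) = a ^ (2 : ℕ) := by
  rw [two_toReal, Real.rpow_natCast]

lemma diag_memℓp {D : Word n → H →L[ℂ] H} {C : ℝ} (hC : ∀ α, ‖D α‖ ≤ C)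
    (x : FkH n H) : Memℓp (fun α => D α (x α)) 2 := by
  have hC0 : 0 ≤ C := le_trans (norm_nonneg _) (hC 1)
  apply memℓp_gen
  have hx : Summable (fun α : Word n => ‖x α‖ ^ ((2:ℝ≥0∞)).toReal) :=
    (lp.memℓp x).summable (by norm_num)
  apply Summable.of_nonneg_of_le
    (fun α => Real.rpow_nonneg (norm_nonneg _) _)
    (fun α => ?_) (hx.mul_left (C ^ 2))
  rw [rpow_two_eq, rpow_two_eq]
  calc ‖D α (x α)‖ ^ (2:ℕ) ≤ (C * ‖x α‖) ^ (2:ℕ) := by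
        apply pow_le_pow_left₀ (norm_nonneg _)
        exact le_trans ((D α).le_opNorm (x α))
          (mul_le_mul_of_nonneg_right (hC α) (norm_nonneg _))
    _ = C ^ 2 * ‖x α‖ ^ (2:ℕ) := by ring

def diagOp (D : Word n → H →L[ℂ] H) (C : ℝ) (hC0 : 0 ≤ C) (hC : ∀ α, ‖D α‖ ≤ C) :
    FkH n H →L[ℂ] FkH n H :=
  LinearMap.mkContinuous
    { toFun := fun x => (⟨fun α => D α (x α), diag_memℓp hC x⟩ : FkH n H)
      map_add' := fun x y => by
        apply lp.ext
        funext α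
        simp only [lp.coeFn_add, Pi.add_apply]
        exact map_add (D α) _ _
      map_smul' := fun c x => by
        apply lp.ext
        funext α
        simp only [lp.coeFn_smul, Pi.smul_apply, RingHom.id_apply]
        exact map_smul (D α) _ _ }
    C
    (fun x => by
      dsimp only [LinearMap.coe_mk, AddHom.coe_mk]
      apply lp.norm_le_of_tsum_le (by norm_num) (mul_nonneg hC0 (norm_nonneg _))
      have hptw : ∀ α : Word n, ‖D α (x α)‖ ^ ((2:ℝ≥0∞)).toReal
          ≤ C ^ 2 * ‖x α‖ ^ ((2:ℝ≥0∞)).toReal := by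
        intro α
        rw [rpow_two_eq, rpow_two_eq]
        calc ‖D α (x α)‖ ^ (2:ℕ) ≤ (C * ‖x α‖) ^ (2:ℕ) := by
              apply pow_le_pow_left₀ (norm_nonneg _)
              exact le_trans ((D α).le_opNorm (x α))
                (mul_le_mul_of_nonneg_right (hC α) (norm_nonneg _))
          _ = C ^ 2 * ‖x α‖ ^ (2:ℕ) := by ring
      have hx : Summable (fun α : Word n => ‖x α‖ ^ ((2:ℝ≥0∞)).toReal) :=
        (lp.memℓp x).summable (by norm_num)
      have hDx : Summable (fun α : Word n => ‖D α (x α)‖ ^ ((2:ℝ≥0∞)).toReal) :=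
        (diag_memℓp hC x).summable (by norm_num)
      calc (∑' α : Word n, ‖D α (x α)‖ ^ ((2:ℝ≥0∞)).toReal)
          ≤ ∑' α : Word n, C ^ 2 * ‖x α‖ ^ ((2:ℝ≥0∞)).toReal :=
            Summable.tsum_le_tsum hptw hDx (hx.mul_left _)
        _ = C ^ 2 * ∑' α : Word n, ‖x α‖ ^ ((2:ℝ≥0∞)).toReal := tsum_mul_left
        _ = C ^ 2 * ‖x‖ ^ ((2:ℝ≥0∞)).toReal := by
            rw [← lp.norm_rpow_eq_tsum (by norm_num) x]
        _ = (C * ‖x‖) ^ ((2:ℝ≥0∞)).toReal := by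
            rw [rpow_two_eq, rpow_two_eq]
            ring)

lemma diagOp_apply {D : Word n → H →L[ℂ] H} {C : ℝ} (hC0 : 0 ≤ C) (hC : ∀ α, ‖D α‖ ≤ C)
    (x : FkH n H) (α : Word n) : (diagOp D C hC0 hC x : ∀ _ : Word n, H) α = D α (x α) := rfl

lemma diagOp_norm_le {D : Word n → H →L[ℂ] H} {C : ℝ} (hC0 : 0 ≤ C) (hC : ∀ α, ‖D α‖ ≤ C) :
    ‖diagOp D C hC0 hC‖ ≤ C :=
  LinearMap.mkContinuous_norm_le _ hC0 _

lemma diagOp_eq_diagOp {D D' : Word n → H →L[ℂ] H} {C C' : ℝ}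
    (hC0 : 0 ≤ C) (hC : ∀ α, ‖D α‖ ≤ C) (hC0' : 0 ≤ C') (hC' : ∀ α, ‖D' α‖ ≤ C')
    (h : ∀ α, D α = D' α) : diagOp D C hC0 hC = diagOp D' C' hC0' hC' := by
  ext x α
  show D α (x α) = D' α (x α)
  rw [h α]

lemma diagOp_comp_diagOp {D D' : Word n → H →L[ℂ] H} {C C' : ℝ}
    (hC0 : 0 ≤ C) (hC : ∀ α, ‖D α‖ ≤ C) (hC0' : 0 ≤ C') (hC' : ∀ α, ‖D' α‖ ≤ C') :
    (diagOp D C hC0 hC) ∘L (diagOp D' C' hC0' hC')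
      = diagOp (fun α => D α ∘L D' α) (C * C') (mul_nonneg hC0 hC0')
          (fun α => le_trans (opNorm_comp_le _ _)
            (mul_le_mul (hC α) (hC' α) (norm_nonneg _) hC0)) := by
  ext x α
  rfl

lemma adjoint_diagOp {D : Word n → H →L[ℂ] H} {C : ℝ} (hC0 : 0 ≤ C) (hC : ∀ α, ‖D α‖ ≤ C) :
    adjoint (diagOp D C hC0 hC)
      = diagOp (fun α => adjoint (D α)) C hC0
          (fun α => by
            rw [LinearIsometryEquiv.norm_map ContinuousLinearMap.adjoint (D α)]
            exact hC α) := by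
  symm
  rw [eq_adjoint_iff]
  intro x y
  rw [lp.inner_eq_tsum, lp.inner_eq_tsum]
  apply tsum_congr
  intro α
  exact adjoint_inner_left (D α) _ _

lemma diagOp_injective {D : Word n → H →L[ℂ] H} {C : ℝ} (hC0 : 0 ≤ C) (hC : ∀ α, ‖D α‖ ≤ C)
    (hinj : ∀ α, Function.Injective (D α)) : Function.Injective (diagOp D C hC0 hC) := by
  intro x y hxy
  apply lp.ext
  funext α
  have := congrFun (congrArg (fun z : FkH n H => (z : ∀ _ : Word n, H)) hxy) α
  simp only [diagOp_apply] at this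
  exact hinj α this

lemma diagOp_single {D : Word n → H →L[ℂ] H} {C : ℝ} (hC0 : 0 ≤ C) (hC : ∀ α, ‖D α‖ ≤ C)
    (α : Word n) (v : H) :
    diagOp D C hC0 hC (lp.single 2 α v) = lp.single 2 α (D α v) := by
  apply lp.ext
  funext β
  rw [diagOp_apply]
  by_cases hβ : β = α
  · subst hβ
    rw [lp.single_apply_self, lp.single_apply_self]
  · rw [lp.single_apply_ne _ _ _ hβ, lp.single_apply_ne _ _ _ hβ, map_zero]

lemma diagOp_denseRange {D : Word n → H →L[ℂ] H} {C : ℝ} (hC0 : 0 ≤ C) (hC : ∀ α, ‖D α‖ ≤ C)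
    (hsurj : ∀ α, Function.Surjective (D α)) : DenseRange (diagOp D C hC0 hC) := by
  intro x
  have hx : HasSum (fun α : Word n => lp.single 2 α (x α)) x :=
    lp.hasSum_single (by norm_num) x
  apply mem_closure_of_tendsto hx
  apply Filter.Eventually.of_forall
  intro s
  refine ⟨∑ α ∈ s, lp.single 2 α ((hsurj α (x α)).choose), ?_⟩
  rw [map_sum]
  refine Finset.sum_congr rfl fun α _ => ?_
  rw [diagOp_single, (hsurj α (x α)).choose_spec]

end Diag

section CompactDiag

def evalCLM (α : Word n) : FkH n H →L[ℂ] H :=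
  LinearMap.mkContinuous
    { toFun := fun x => x α
      map_add' := fun x y => by simp [lp.coeFn_add]
      map_smul' := fun c x => by simp [lp.coeFn_smul] }
    1 (fun x => by
        rw [one_mul]
        exact lp.norm_apply_le_norm (by norm_num) x α)

lemma evalCLM_apply (α : Word n) (x : FkH n H) : evalCLM α x = x α := rfl

set_option maxHeartbeats 1000000 in
def singleCLM (α : Word n) : H →L[ℂ] FkH n H :=
  LinearMap.mkContinuous
    { toFun := fun v => lp.single 2 α v
      map_add' := fun v w => by
        apply lp.ext
        funext β
        by_cases hβ : β = α
        · subst hβ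
          simp only [lp.coeFn_add, Pi.add_apply, lp.single_apply_self]
        · simp only [lp.coeFn_add, Pi.add_apply, lp.single_apply_ne _ _ _ hβ, add_zero]
      map_smul' := fun c v => by
        rw [RingHom.id_apply]
        exact lp.single_smul (E := fun _ : Word n => H) 2 α c v }
    1 (fun v => by
        dsimp only [LinearMap.coe_mk, AddHom.coe_mk]
        rw [one_mul]
        exact le_of_eq (lp.norm_single (E := fun _ : Word n => H) (p := 2) (by norm_num) α v))

lemma singleCLM_apply (α : Word n) (v : H) : singleCLM α v = lp.single 2 α v := rfl

lemma isCompact_singleBlock (α : Word n) (A : H →L[ℂ] H) (hA : IsCompactOperator ⇑A) :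
    IsCompactOperator ⇑((singleCLM α : H →L[ℂ] FkH n H) ∘L A ∘L evalCLM α) := by
  have h1 : IsCompactOperator (⇑A ∘ ⇑(evalCLM (H := H) α)) := hA.comp_clm _
  have h2 : IsCompactOperator (⇑(singleCLM (H := H) α) ∘ (⇑A ∘ ⇑(evalCLM (H := H) α))) :=
    h1.continuous_comp (singleCLM α).continuous
  have : ⇑((singleCLM α : H →L[ℂ] FkH n H) ∘L A ∘L evalCLM α)
      = ⇑(singleCLM (H := H) α) ∘ (⇑A ∘ ⇑(evalCLM (H := H) α)) := by
    funext x
    rfl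
  rwa [this]

lemma isCompact_finsetSum {ι : Type*} (s : Finset ι) (T : ι → FkH n H →L[ℂ] FkH n H)
    (hT : ∀ i ∈ s, IsCompactOperator ⇑(T i)) :
    IsCompactOperator ⇑(∑ i ∈ s, T i) := by
  classical
  induction s using Finset.induction_on with
  | empty => simpa using isCompactOperator_zero
  | insert _ _ hnotmem ih =>
    rename_i a s'
    rw [Finset.sum_insert hnotmem]
    have h1 : IsCompactOperator ⇑(T a) := hT a (Finset.mem_insert_self a s')
    have h2 : IsCompactOperator ⇑(∑ i ∈ s', T i) :=
      ih fun i hi => hT i (Finset.mem_insert_of_mem hi)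
    have : ⇑(T a + ∑ i ∈ s', T i) = ⇑(T a) + ⇑(∑ i ∈ s', T i) := by
      funext x
      rfl
    rw [this]
    exact h1.add h2

lemma diagOp_isCompact {D : Word n → H →L[ℂ] H} {C : ℝ} (hC0 : 0 ≤ C) (hC : ∀ α, ‖D α‖ ≤ C)
    (en : Word n → ℕ) (heninj : Function.Injective en)
    (hcpt : ∀ α, IsCompactOperator ⇑(D α))
    (hdecay : ∀ α, ‖D α‖ ≤ (1 / 2 : ℝ) ^ en α) :
    IsCompactOperator ⇑(diagOp D C hC0 hC) := by
  classical
  -- finite truncation sets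
  have hfin : ∀ M : ℕ, (Set.Finite {α : Word n | en α ≤ M}) := by
    intro M
    have : {α : Word n | en α ≤ M} = en ⁻¹' (Set.Iic M) := rfl
    rw [this]
    exact Set.Finite.preimage (Set.injOn_of_injective heninj) (Set.finite_Iic M)
  set T : ℕ → (FkH n H →L[ℂ] FkH n H) := fun M =>
    ∑ α ∈ (hfin M).toFinset, (singleCLM α : H →L[ℂ] FkH n H) ∘L D α ∘L evalCLM α with hT
  have hTcpt : ∀ M, IsCompactOperator ⇑(T M) := by
    intro M
    exact isCompact_finsetSum _ _ fun α _ => isCompact_singleBlock α (D α) (hcpt α)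
  -- component formula for T M
  have hTapp : ∀ (M : ℕ) (x : FkH n H) (β : Word n),
      (T M x : ∀ _ : Word n, H) β = if en β ≤ M then D β (x β) else 0 := by
    intro M x β
    rw [hT]
    rw [ContinuousLinearMap.sum_apply]
    rw [lp.coeFn_sum, Finset.sum_apply]
    by_cases hβ : en β ≤ M
    · have hmem : β ∈ (hfin M).toFinset := by
        rw [Set.Finite.mem_toFinset]
        exact hβ
      rw [if_pos hβ]
      rw [Finset.sum_eq_single_of_mem β hmem]
      · show (lp.single 2 β (D β (x β)) : ∀ _ : Word n, H) β = D β (x β)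
        exact lp.single_apply_self 2 β _
      · intro γ _ hγβ
        show (lp.single 2 γ (D γ (x γ)) : ∀ _ : Word n, H) β = 0
        exact lp.single_apply_ne 2 γ _ (Ne.symm hγβ)
    · rw [if_neg hβ]
      apply Finset.sum_eq_zero
      intro γ hγ
      have hγM : en γ ≤ M := by
        rw [Set.Finite.mem_toFinset] at hγ
        exact hγ
      have hne : β ≠ γ := by
        intro hcon
        rw [hcon] at hβ
        exact hβ hγM
      show (lp.single 2 γ (D γ (x γ)) : ∀ _ : Word n, H) β = 0
      exact lp.single_apply_ne 2 γ _ hne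
  -- splitting
  have hsplit : ∀ M : ℕ, ∃ R : FkH n H →L[ℂ] FkH n H,
      diagOp D C hC0 hC = T M + R ∧ ‖R‖ ≤ (1/2 : ℝ) ^ (M + 1) := by
    intro M
    have hbnd : ∀ α : Word n,
        ‖(fun α => if en α ≤ M then (0 : H →L[ℂ] H) else D α) α‖ ≤ (1/2 : ℝ) ^ (M + 1) := by
      intro α
      dsimp only
      by_cases hα : en α ≤ M
      · rw [if_pos hα, norm_zero]
        positivity
      · rw [if_neg hα]
        refine le_trans (hdecay α) ?_
        apply pow_le_pow_of_le_one (by norm_num) (by norm_num)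
        omega
    refine ⟨diagOp _ _ (by positivity) hbnd, ?_, diagOp_norm_le _ _⟩
    ext x β
    show (diagOp D C hC0 hC x : ∀ _ : Word n, H) β
      = ((T M x + diagOp _ _ _ hbnd x : FkH n H) : ∀ _ : Word n, H) β
    rw [lp.coeFn_add, Pi.add_apply, hTapp, diagOp_apply, diagOp_apply]
    by_cases hβ : en β ≤ M
    · rw [if_pos hβ, if_pos hβ, ContinuousLinearMap.zero_apply, add_zero]
    · rw [if_neg hβ, if_neg hβ, zero_add]
  -- norm of remainder
  have hnorm : ∀ M : ℕ, ‖diagOp D C hC0 hC - T M‖ ≤ (1/2 : ℝ) ^ (M + 1) := by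
    intro M
    obtain ⟨R, hR1, hR2⟩ := hsplit M
    have : diagOp D C hC0 hC - T M = R := by
      rw [hR1]
      abel
    rw [this]
    exact hR2
  have htendsto : Filter.Tendsto T atTop (nhds (diagOp D C hC0 hC)) := by
    rw [Metric.tendsto_atTop]
    intro ε hε
    obtain ⟨M0, hM0⟩ := exists_pow_lt_of_lt_one hε (by norm_num : (1/2 : ℝ) < 1)
    refine ⟨M0, fun M hM => ?_⟩
    rw [dist_eq_norm, norm_sub_rev]
    calc ‖diagOp D C hC0 hC - T M‖ ≤ (1/2 : ℝ) ^ (M + 1) := hnorm M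
      _ ≤ (1/2 : ℝ) ^ M0 := by
          apply pow_le_pow_of_le_one (by norm_num) (by norm_num)
          omega
      _ < ε := hM0
  exact isCompactOperator_of_tendsto htendsto (Filter.Eventually.of_forall hTcpt)

end CompactDiag
end Stmt16Aux

set_option maxHeartbeats 2000000 in
set_option synthInstance.maxHeartbeats 400000 in
theorem stmt_16 (n : ℕ) (hn : 1 ≤ n)
    {H : Type*} [NormedAddCommGroup H] [InnerProductSpace ℂ H] [CompleteSpace H]
    [TopologicalSpace.SeparableSpace H]
    (K : Fin n → H →L[ℂ] H) (hcpt : ∀ i, IsCompactOperator ⇑(K i))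
    (hq : Tendsto (fun k : ℕ => ‖rowSum K k‖ ^ ((1 : ℝ) / (2 * k))) atTop (nhds 0))
    (Kt : Fin n → lp (fun _ : Word n => H) 2 →L[ℂ] lp (fun _ : Word n => H) 2)
    (hKt : ∀ (i : Fin n) (x : lp (fun _ : Word n => H) 2) (α : Word n),
        (Kt i x : ∀ _ : Word n, H) α = K i ((x : ∀ _ : Word n, H) α)) :
    ∃ L : Fin n → lp (fun _ : Word n => H) 2 →L[ℂ] lp (fun _ : Word n => H) 2,
      (∀ i, IsCompactOperator ⇑(L i)) ∧
      ∃ X Y : lp (fun _ : Word n => H) 2 →L[ℂ] lp (fun _ : Word n => H) 2,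
        Function.Injective X ∧ DenseRange X ∧
        Function.Injective Y ∧ DenseRange Y ∧
        ∀ i : Fin n,
          (adjoint (Kt i)).comp X = X.comp (adjoint (L i)) ∧
          Y.comp (adjoint (Kt i)) = (adjoint (L i)).comp Y := by
  classical
  set en : Word n → ℕ := fun α => Encodable.encode (FreeMonoid.toList α) with hen
  have heninj : Function.Injective en := by
    intro a b hab
    have h1 : FreeMonoid.toList a = FreeMonoid.toList b := Encodable.encode_injective hab
    exact FreeMonoid.toList.injective h1
  have hδ0 : ∀ α : Word n, (0:ℝ) < (1/2 : ℝ) ^ en α := fun α => by positivity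
  have hδ1 : ∀ α : Word n, ((1/2 : ℝ)) ^ en α ≤ 1 :=
    fun α => pow_le_one₀ (by norm_num) (by norm_num)
  have hex : ∀ α : Word n, ∃ S Sv : H →L[ℂ] H, Sv ∘L S = 1 ∧ S ∘L Sv = 1 ∧ adjoint S = S ∧
      (∀ x, ‖Sv x‖ ≤ ‖x‖) ∧ (∀ i, ‖S ∘L K i ∘L Sv‖ ≤ (1/2 : ℝ) ^ en α) :=
    fun α => Stmt16Aux.exists_conj K hq (hδ0 α) (hδ1 α)
  choose S Sv hleft hright hadjS hSvnorm hkey using hex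
  have hrightx : ∀ (α : Word n) (z : H), S α (Sv α z) = z := by
    intro α z
    have := congrArg (fun T : H →L[ℂ] H => T z) (hright α)
    simpa using this
  have hleftx : ∀ (α : Word n) (z : H), Sv α (S α z) = z := by
    intro α z
    have := congrArg (fun T : H →L[ℂ] H => T z) (hleft α)
    simpa using this
  -- blocks
  set B : Fin n → Word n → H →L[ℂ] H := fun i α => S α ∘L K i ∘L Sv α with hB
  have hBnorm : ∀ i α, ‖B i α‖ ≤ (1/2 : ℝ) ^ en α := fun i α => hkey α i
  have hBnorm1 : ∀ i α, ‖B i α‖ ≤ 1 := fun i α => (hBnorm i α).trans (hδ1 α)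
  have hBcpt : ∀ i α, IsCompactOperator ⇑(B i α) := by
    intro i α
    have h1 : IsCompactOperator (⇑(K i) ∘ ⇑(Sv α)) := (hcpt i).comp_clm _
    have h2 : IsCompactOperator (⇑(S α) ∘ (⇑(K i) ∘ ⇑(Sv α))) :=
      h1.continuous_comp (S α).continuous
    have h3 : ⇑(B i α) = ⇑(S α) ∘ (⇑(K i) ∘ ⇑(Sv α)) := by
      funext x
      rfl
    rwa [h3]
  set L : Fin n → lp (fun _ : Word n => H) 2 →L[ℂ] lp (fun _ : Word n => H) 2 :=
    fun i => Stmt16Aux.diagOp (B i) 1 zero_le_one (hBnorm1 i) with hL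
  have hLcpt : ∀ i, IsCompactOperator ⇑(L i) := by
    intro i
    exact Stmt16Aux.diagOp_isCompact zero_le_one (hBnorm1 i) en heninj (hBcpt i) (hBnorm i)
  -- scaling factors
  set t : Word n → ℂ := fun α => (((1 + ‖S α‖ : ℝ)) : ℂ)⁻¹ with ht
  have htpos : ∀ α, (0:ℝ) < 1 + ‖S α‖ := fun α => by positivity
  have htne : ∀ α, t α ≠ 0 := by
    intro α
    rw [ht]
    simp only [ne_eq, inv_eq_zero]
    exact_mod_cast (htpos α).ne'
  have hXcomp_norm : ∀ α : Word n, ‖t α • S α‖ ≤ 1 := by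
    intro α
    rw [norm_smul]
    have h1 : ‖t α‖ = (1 + ‖S α‖)⁻¹ := by
      rw [ht]
      rw [norm_inv, Complex.norm_real, Real.norm_eq_abs, abs_of_pos (htpos α)]
    rw [h1]
    rw [inv_mul_le_iff₀ (htpos α)]
    nlinarith [norm_nonneg (S α)]
  have hYcomp_norm : ∀ α : Word n, ‖Sv α‖ ≤ 1 := by
    intro α
    refine opNorm_le_bound _ zero_le_one fun x => ?_
    rw [one_mul]
    exact hSvnorm α x
  set X : lp (fun _ : Word n => H) 2 →L[ℂ] lp (fun _ : Word n => H) 2 :=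
    Stmt16Aux.diagOp (fun α => t α • S α) 1 zero_le_one hXcomp_norm with hX
  set Y : lp (fun _ : Word n => H) 2 →L[ℂ] lp (fun _ : Word n => H) 2 :=
    Stmt16Aux.diagOp (fun α => Sv α) 1 zero_le_one hYcomp_norm with hY
  -- injectivity / density of components
  have hSinj : ∀ α, Function.Injective (S α) := by
    intro α a b hab
    have := congrArg (Sv α) hab
    rwa [hleftx, hleftx] at this
  have hXinj : Function.Injective X :=
    Stmt16Aux.diagOp_injective zero_le_one hXcomp_norm fun α a b hab => by
      have h1 : t α • S α a = t α • S α b := hab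
      have h2 : S α a = S α b := smul_right_injective H (htne α) h1
      exact hSinj α h2
  have hXdense : DenseRange X :=
    Stmt16Aux.diagOp_denseRange zero_le_one hXcomp_norm fun α v =>
      ⟨Sv α ((t α)⁻¹ • v), by
        show t α • S α (Sv α ((t α)⁻¹ • v)) = v
        rw [hrightx, smul_smul, mul_inv_cancel₀ (htne α), one_smul]⟩
  have hYinj : Function.Injective Y :=
    Stmt16Aux.diagOp_injective zero_le_one hYcomp_norm fun α a b hab => by
      have := congrArg (S α) hab
      rwa [hrightx, hrightx] at this
  have hYdense : DenseRange Y :=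
    Stmt16Aux.diagOp_denseRange zero_le_one hYcomp_norm fun α v => ⟨S α v, hleftx α v⟩
  -- identity for adjoints of components
  have hadj1 : adjoint (1 : H →L[ℂ] H) = 1 := by
    rw [← ContinuousLinearMap.star_eq_adjoint, star_one]
  have hSvadj : ∀ α, adjoint (Sv α) = Sv α := by
    intro α
    have h1 : adjoint (Sv α) ∘L S α = 1 := by
      have h2 : adjoint (Sv α) ∘L adjoint (S α) = 1 := by
        rw [← adjoint_comp, hright α, hadj1]
      rwa [hadjS α] at h2
    calc adjoint (Sv α) = adjoint (Sv α) ∘L (S α ∘L Sv α) := by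
          rw [hright α]
          ext x
          rfl
      _ = (adjoint (Sv α) ∘L S α) ∘L Sv α := by
          ext x
          rfl
      _ = Sv α := by
          rw [h1]
          ext x
          rfl
  have hBadj : ∀ i α, adjoint (B i α) = (Sv α ∘L adjoint (K i)) ∘L S α := by
    intro i α
    rw [hB]
    dsimp only
    rw [adjoint_comp, adjoint_comp, hSvadj α, hadjS α]
  have id1 : ∀ (i : Fin n) (α : Word n) (v : H),
      adjoint (K i) ((t α • S α) v) = (t α • S α) (adjoint (B i α) v) := by
    intro i α v
    rw [hBadj i α]
    have h1 : adjoint (K i) ((t α • S α) v) = t α • adjoint (K i) (S α v) := by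
      rw [ContinuousLinearMap.smul_apply, map_smul]
    have h2 : (t α • S α) (((Sv α ∘L adjoint (K i)) ∘L S α) v)
        = t α • S α (Sv α (adjoint (K i) (S α v))) := rfl
    rw [h1, h2, hrightx]
  have id2 : ∀ (i : Fin n) (α : Word n) (v : H),
      Sv α (adjoint (K i) v) = adjoint (B i α) (Sv α v) := by
    intro i α v
    rw [hBadj i α]
    show Sv α (adjoint (K i) v) = Sv α (adjoint (K i) (S α (Sv α v)))
    rw [hrightx]
  -- diag representation of Kt
  have hKtdiag : ∀ i, Kt i = Stmt16Aux.diagOp (fun _ : Word n => K i) ‖K i‖ (norm_nonneg _)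
      (fun _ => le_rfl) := by
    intro i
    ext x β
    rw [Stmt16Aux.diagOp_apply]
    exact hKt i x β
  have hadjKt : ∀ i, adjoint (Kt i) = Stmt16Aux.diagOp (fun _ : Word n => adjoint (K i)) ‖K i‖
      (norm_nonneg _) (fun _ => by
        rw [LinearIsometryEquiv.norm_map ContinuousLinearMap.adjoint (K i)]) := by
    intro i
    rw [hKtdiag i, Stmt16Aux.adjoint_diagOp]
  have hadjL : ∀ i, adjoint (L i) = Stmt16Aux.diagOp (fun α => adjoint (B i α)) 1 zero_le_one
      (fun α => by
        rw [LinearIsometryEquiv.norm_map ContinuousLinearMap.adjoint (B i α)]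
        exact hBnorm1 i α) := by
    intro i
    rw [hL]
    dsimp only
    rw [Stmt16Aux.adjoint_diagOp]
  refine ⟨L, hLcpt, X, Y, hXinj, hXdense, hYinj, hYdense, fun i => ⟨?_, ?_⟩⟩
  · rw [hadjKt i, hadjL i]
    ext x β
    show adjoint (K i) ((t β • S β) (x β)) = (t β • S β) (adjoint (B i β) (x β))
    exact id1 i β (x β)
  · rw [hadjKt i, hadjL i]
    ext x β
    show Sv β (adjoint (K i) (x β)) = adjoint (B i β) (Sv β (x β))
    exact id2 i β (x β)


end
end

section
/- Let n ≥ 1 and let W = (W₁,…,Wₙ) be the weighted left multi-shift on F²(Hₙ) associated with a weight sequence μ = {μ_β}_{|β|≥1} of strictly positive reals with sup_{α∈𝔽ₙ⁺} μ_{g_iα} < ∞ for each i. For λ = (λ₁,…,λₙ) ∈ ℂⁿ, there exists a nonzero z ∈ F²(Hₙ) with W_i^* z = λ̄_i z for all i ∈ {1,…,n} if and only if ∑_{α∈𝔽ₙ⁺} |λ_α|²/μ(α,g₀)² < ∞. In that case, the vector z_λ := ∑_{α∈𝔽ₙ⁺} (λ̄_α/μ(α,g₀)) e_α belongs to F²(Hₙ),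 satisfies W_i^* z_λ = λ̄_i z_λ for all i, and every joint eigenvector z of (W₁^*,…,Wₙ^*) with eigenvalue (λ̄₁,…,λ̄ₙ) is a nonzero scalar multiple of z_λ. -/
open Filter ContinuousLinearMap
open scoped ComplexConjugate

noncomputable section

attribute [local instance] Classical.decEq

def lamProd {n : ℕ} (lam : Fin n → ℂ) (α : Word n) : ℂ :=
  ((FreeMonoid.toList α).map lam).prod


namespace stmt18aux
variable {n : ℕ}

lemma lamProd_one (lam : Fin n → ℂ) : lamProd lam 1 = 1 := rfl

lemma lamProd_cons (lam : Fin n → ℂ) (i : Fin n) (α : Word n) :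
    lamProd lam (FreeMonoid.of i * α) = lam i * lamProd lam α := by
  simp [lamProd, FreeMonoid.toList_of_mul]

lemma muProd_one_left (μ : Word n → ℝ) : muProd μ 1 1 = 1 := rfl

lemma muProd_cons (μ : Word n → ℝ) (i : Fin n) (β : Word n) :
    muProd μ (FreeMonoid.of i * β) 1 = μ (FreeMonoid.of i * β) * muProd μ β 1 := by
  unfold muProd
  rw [show FreeMonoid.length (FreeMonoid.of i * β) = FreeMonoid.length β + 1 by
    simp [FreeMonoid.length_mul]; ring]
  rw [List.range_succ_eq_map]
  simp [List.map_map, Function.comp_def, FreeMonoid.toList_of_mul]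

lemma muProd_pos (μ : Word n → ℝ) (hμ : ∀ β : Word n, 1 ≤ FreeMonoid.length β → 0 < μ β)
    (α : Word n) : 0 < muProd μ α 1 := by
  induction α using FreeMonoid.inductionOn' with
  | one => rw [muProd_one_left]; norm_num
  | of_mul i β ih =>
      rw [muProd_cons]
      exact mul_pos (hμ _ (by simp [FreeMonoid.length_mul])) ih

open scoped InnerProductSpace in
lemma coord (x : Fock n) (α : Word n) : ⟪fockE α, x⟫_ℂ = (x : ∀ _ : Word n, ℂ) α := by
  rw [fockE, lp.inner_single_left]
  simp [RCLike.inner_apply]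

lemma adj_coord {μ : Word n → ℝ} {W : Fin n → Fock n →L[ℂ] Fock n}
    (hW : IsWeightedShift μ W) (i : Fin n) (v : Fock n) (α : Word n) :
    ((adjoint (W i) v : Fock n) : ∀ _ : Word n, ℂ) α
      = (μ (FreeMonoid.of i * α) : ℂ) * (v : ∀ _ : Word n, ℂ) (FreeMonoid.of i * α) := by
  rw [← coord, adjoint_inner_right, hW i α, inner_smul_left, coord, Complex.conj_ofReal]

lemma pointwise {μ : Word n → ℝ} {W : Fin n → Fock n →L[ℂ] Fock n}
    (hW : IsWeightedShift μ W) {lam : Fin n → ℂ} {z : Fock n} (i : Fin n)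
    (h : adjoint (W i) z = (starRingEnd ℂ) (lam i) • z) (α : Word n) :
    (μ (FreeMonoid.of i * α) : ℂ) * (z : ∀ _ : Word n, ℂ) (FreeMonoid.of i * α)
      = (starRingEnd ℂ) (lam i) * (z : ∀ _ : Word n, ℂ) α := by
  have := congrFun (congrArg (fun w : Fock n => (w : ∀ _ : Word n, ℂ)) h) α
  simp only at this
  rw [adj_coord hW] at this
  rw [this, lp.coeFn_smul, Pi.smul_apply, smul_eq_mul]

lemma recursion {μ : Word n → ℝ}
    (hμ : ∀ β : Word n, 1 ≤ FreeMonoid.length β → 0 < μ β)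
    {W : Fin n → Fock n →L[ℂ] Fock n}
    (hW : IsWeightedShift μ W) {lam : Fin n → ℂ} {z : Fock n}
    (h : ∀ i, adjoint (W i) z = (starRingEnd ℂ) (lam i) • z) (α : Word n) :
    (z : ∀ _ : Word n, ℂ) α
      = (starRingEnd ℂ) (lamProd lam α) * (z : ∀ _ : Word n, ℂ) 1 / (muProd μ α 1 : ℂ) := by
  induction α using FreeMonoid.inductionOn' with
  | one => simp [lamProd_one, muProd_one_left]
  | of_mul i β ih =>
      have hp := pointwise hW i (h i) β
      have hμ1 : (μ (FreeMonoid.of i * β) : ℂ) ≠ 0 := by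
        exact_mod_cast (hμ _ (by simp [FreeMonoid.length_mul])).ne'
      have hμ2 : (muProd μ β 1 : ℂ) ≠ 0 := by
        exact_mod_cast (muProd_pos μ hμ β).ne'
      rw [ih] at hp
      have : (z : ∀ _ : Word n, ℂ) (FreeMonoid.of i * β)
          = (starRingEnd ℂ) (lam i) *
            ((starRingEnd ℂ) (lamProd lam β) * (z : ∀ _ : Word n, ℂ) 1 / (muProd μ β 1 : ℂ)) /
            (μ (FreeMonoid.of i * β) : ℂ) := by
        field_simp at hp ⊢
        linear_combination hp
      rw [this, lamProd_cons, muProd_cons, map_mul]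
      push_cast
      field_simp

lemma norm_cand {μ : Word n → ℝ}
    (hμ : ∀ β : Word n, 1 ≤ FreeMonoid.length β → 0 < μ β) (lam : Fin n → ℂ) (α : Word n) :
    ‖(starRingEnd ℂ) (lamProd lam α) / (muProd μ α 1 : ℂ)‖ ^ (2 : ℕ)
      = ‖lamProd lam α‖ ^ 2 / (muProd μ α 1) ^ 2 := by
  rw [norm_div, Complex.norm_conj, Complex.norm_real, Real.norm_eq_abs,
    abs_of_pos (muProd_pos μ hμ α), div_pow]

lemma exists_zl {μ : Word n → ℝ}
    (hμ : ∀ β : Word n, 1 ≤ FreeMonoid.length β → 0 < μ β)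
    {W : Fin n → Fock n →L[ℂ] Fock n} (hW : IsWeightedShift μ W) (lam : Fin n → ℂ)
    (hs : Summable (fun α : Word n => ‖lamProd lam α‖ ^ 2 / (muProd μ α 1) ^ 2)) :
    ∃ zl : Fock n,
      (∀ α : Word n, (zl : ∀ _ : Word n, ℂ) α =
        (starRingEnd ℂ) (lamProd lam α) / (muProd μ α 1 : ℂ)) ∧
      zl ≠ 0 ∧ (∀ i : Fin n, adjoint (W i) zl = (starRingEnd ℂ) (lam i) • zl) := by
  set f : Word n → ℂ := fun α => (starRingEnd ℂ) (lamProd lam α) / (muProd μ α 1 : ℂ) with hf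
  have hmem : Memℓp f 2 := by
    apply memℓp_gen
    have h2 : ((2 : ENNReal)).toReal = ((2 : ℕ) : ℝ) := by norm_num
    simp only [h2, Real.rpow_natCast]
    exact hs.congr fun α => (norm_cand hμ lam α).symm
  refine ⟨⟨f, hmem⟩, fun α => rfl, ?_, ?_⟩
  · intro h
    have h1 := congrFun (congrArg (fun w : Fock n => (w : ∀ _ : Word n, ℂ)) h) 1
    simp only [lp.coeFn_zero, Pi.zero_apply] at h1
    simp [hf, lamProd_one, muProd_one_left] at h1
  · intro i
    apply lp.ext
    funext α
    rw [adj_coord hW, lp.coeFn_smul, Pi.smul_apply, smul_eq_mul]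
    show (μ (FreeMonoid.of i * α) : ℂ) * f (FreeMonoid.of i * α) = (starRingEnd ℂ) (lam i) * f α
    have hμ1 : (μ (FreeMonoid.of i * α) : ℂ) ≠ 0 := by
      exact_mod_cast (hμ _ (by simp [FreeMonoid.length_mul])).ne'
    have hμ2 : (muProd μ α 1 : ℂ) ≠ 0 := by
      exact_mod_cast (muProd_pos μ hμ α).ne'
    simp only [hf, lamProd_cons, muProd_cons, map_mul]
    push_cast
    field_simp

end stmt18aux

theorem stmt_18 (n : ℕ) (hn : 1 ≤ n) (μ : Word n → ℝ)
    (hμ : ∀ β : Word n, 1 ≤ FreeMonoid.length β → 0 < μ β)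
    (hbdd : BddWeights μ)
    (W : Fin n → Fock n →L[ℂ] Fock n) (hW : IsWeightedShift μ W)
    (lam : Fin n → ℂ) :
    ((∃ z : Fock n, z ≠ 0 ∧ ∀ i : Fin n,
        adjoint (W i) z = (starRingEnd ℂ) (lam i) • z) ↔
      Summable (fun α : Word n => ‖lamProd lam α‖ ^ 2 / (muProd μ α 1) ^ 2)) ∧
    (Summable (fun α : Word n => ‖lamProd lam α‖ ^ 2 / (muProd μ α 1) ^ 2) →
      ∃ zl : Fock n,
        (∀ α : Word n, (zl : ∀ _ : Word n, ℂ) α =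
          (starRingEnd ℂ) (lamProd lam α) / (muProd μ α 1 : ℂ)) ∧
        zl ≠ 0 ∧
        (∀ i : Fin n, adjoint (W i) zl = (starRingEnd ℂ) (lam i) • zl) ∧
        ∀ z : Fock n, z ≠ 0 →
          (∀ i : Fin n, adjoint (W i) z = (starRingEnd ℂ) (lam i) • z) →
          ∃ c : ℂ, c ≠ 0 ∧ z = c • zl) := by
  classical
  have hz1ne : ∀ z : Fock n, z ≠ 0 →
      (∀ i : Fin n, adjoint (W i) z = (starRingEnd ℂ) (lam i) • z) →
      (z : ∀ _ : Word n, ℂ) 1 ≠ 0 := by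
    intro z hz0 hz h1
    apply hz0
    apply lp.ext
    funext α
    rw [stmt18aux.recursion hμ hW hz α, h1]
    simp [lp.coeFn_zero]
  constructor
  · constructor
    · rintro ⟨z, hz0, hz⟩
      have h1 := hz1ne z hz0 hz
      have hsum : Summable fun α : Word n => ‖(z : ∀ _ : Word n, ℂ) α‖ ^ (2 : ℕ) := by
        have := (lp.memℓp z).summable (p := 2) (by norm_num)
        have h2 : ((2 : ENNReal)).toReal = ((2 : ℕ) : ℝ) := by norm_num
        simpa only [h2, Real.rpow_natCast] using this
      have key : (fun α : Word n => ‖lamProd lam α‖ ^ 2 / (muProd μ α 1) ^ 2)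
          = fun α : Word n => ‖(z : ∀ _ : Word n, ℂ) α‖ ^ (2 : ℕ)
              / ‖(z : ∀ _ : Word n, ℂ) 1‖ ^ (2 : ℕ) := by
        funext α
        have hμp := stmt18aux.muProd_pos μ hμ α
        have hn1 : ‖(z : ∀ _ : Word n, ℂ) 1‖ ≠ 0 := norm_ne_zero_iff.mpr h1
        rw [stmt18aux.recursion hμ hW hz α, norm_div, norm_mul, Complex.norm_conj
          ((lamProd lam α)), Complex.norm_real,
          Real.norm_eq_abs, abs_of_pos hμp, div_pow, mul_pow]
        have habs : ‖((z : ∀ _ : Word n, ℂ) 1)‖ ≠ 0 := by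
          simpa using hn1
        field_simp
      rw [key]
      exact hsum.div_const _
    · intro hs
      obtain ⟨zl, _, h0, he⟩ := stmt18aux.exists_zl hμ hW lam hs
      exact ⟨zl, h0, he⟩
  · intro hs
    obtain ⟨zl, hc, h0, he⟩ := stmt18aux.exists_zl hμ hW lam hs
    refine ⟨zl, hc, h0, he, ?_⟩
    intro z hz0 hz
    have h1 := hz1ne z hz0 hz
    refine ⟨(z : ∀ _ : Word n, ℂ) 1, h1, ?_⟩
    apply lp.ext
    funext α
    rw [lp.coeFn_smul, Pi.smul_apply, smul_eq_mul, hc, stmt18aux.recursion hμ hW hz α]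
    ring


end
end
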